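/- Fix β, η > 0 and z^k = (v^k; y^k) ∈ ℝ^{m₁+m₂}. Then z^{k+1} = T_W(z^k) holds if and only if v^{k+1} = prox_{βg}(v^k − β(∇f(v^k) + Dᵀy^k)) and y^{k+1} = prox_{η ι_d*}(y^k + ηD(2v^{k+1} − v^k)); that is, the implicit fixed-point iteration of T_W admits this explicit two-step form. -/

import Mathlib

noncomputable section

open scoped BigOperators

/-- `ℝ^n` with the Euclidean structure. -/
abbrev Euc (n : ℕ) := EuclideanSpace ℝ (Fin n)

/-- Matrix–vector multiplication, landing in Euclidean space. -/
def mVec {p q : ℕ} (A : Matrix (Fin p) (Fin q) ℝ) (v : Euc q) : Euc p :=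
  WithLp.toLp 2 (fun i => ∑ j, A i j * v j)

/-- The set of proximity points of an extended-real-valued function `ψ` at `x`:
`prox_ψ(x) = argmin_u {½‖u−x‖² + ψ(u)}`. -/
def proxSet {n : ℕ} (ψ : Euc n → EReal) (x : Euc n) : Set (Euc n) :=
  {p | ∀ u : Euc n,
    ((1 / 2 * ‖p - x‖ ^ 2 : ℝ) : EReal) + ψ p ≤ ((1 / 2 * ‖u - x‖ ^ 2 : ℝ) : EReal) + ψ u}

/-- The indicator function `ι_d` of the set `{x | x ≥ d}` (componentwise). -/
def iotaInd {n : ℕ} (d : Euc n) : Euc n → EReal :=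
  fun y => if ∀ i, d i ≤ y i then (0 : EReal) else ⊤

/-- The convex (Fenchel) conjugate `ψ*(x) = sup_u {⟨x,u⟩ − ψ(u)}`. -/
def conjFn {n : ℕ} (ψ : Euc n → EReal) : Euc n → EReal :=
  fun x => ⨆ u : Euc n, (((inner ℝ x u : ℝ) : EReal) - ψ u)



-- mVec linearity
lemma mVec_add {p q : ℕ} (A : Matrix (Fin p) (Fin q) ℝ) (x y : Euc q) :
    mVec A (x + y) = mVec A x + mVec A y := by
  ext i
  show (∑ j, A i j * (x j + y j)) = (∑ j, A i j * x j) + ∑ j, A i j * y j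
  rw [← Finset.sum_add_distrib]
  exact Finset.sum_congr rfl fun j _ => by ring

lemma mVec_smul {p q : ℕ} (A : Matrix (Fin p) (Fin q) ℝ) (c : ℝ) (x : Euc q) :
    mVec A (c • x) = c • mVec A x := by
  ext i
  show (∑ j, A i j * (c * x j)) = c * ∑ j, A i j * x j
  rw [Finset.mul_sum]
  exact Finset.sum_congr rfl fun j _ => by ring

lemma mVec_neg {p q : ℕ} (A : Matrix (Fin p) (Fin q) ℝ) (x : Euc q) :
    mVec A (-x) = -mVec A x := by
  ext i
  show (∑ j, A i j * (-(x j))) = -∑ j, A i j * x j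
  rw [← Finset.sum_neg_distrib]
  exact Finset.sum_congr rfl fun j _ => by ring

lemma mVec_sub {p q : ℕ} (A : Matrix (Fin p) (Fin q) ℝ) (x y : Euc q) :
    mVec A (x - y) = mVec A x - mVec A y := by
  rw [sub_eq_add_neg, mVec_add, mVec_neg, sub_eq_add_neg]

-- uniqueness core
lemma prox_unique_core {n : ℕ} (ψ : Euc n → EReal) (x p q : Euc n) (a b : ℝ)
    (hp : p ∈ proxSet ψ x) (hq : q ∈ proxSet ψ x)
    (hpa : ψ p = (a : EReal)) (hqb : ψ q = (b : EReal))
    (hm : ψ ((1/2 : ℝ) • (p + q)) ≤ (((a + b)/2 : ℝ) : EReal)) : p = q := by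
  set m := (1/2 : ℝ) • (p + q) with hmdef
  have h1 := hp m
  have h2 := hq m
  rw [hpa] at h1
  rw [hqb] at h2
  have h1' : (1/2 * ‖p - x‖^2 + a : ℝ) ≤ (1/2 * ‖m - x‖^2 + (a+b)/2 : ℝ) := by
    have h := h1.trans (add_le_add le_rfl hm)
    rw [← EReal.coe_add, ← EReal.coe_add] at h
    exact_mod_cast h
  have h2' : (1/2 * ‖q - x‖^2 + b : ℝ) ≤ (1/2 * ‖m - x‖^2 + (a+b)/2 : ℝ) := by
    have h := h2.trans (add_le_add le_rfl hm)
    rw [← EReal.coe_add, ← EReal.coe_add] at h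
    exact_mod_cast h
  have hmx : m - x = (1/2 : ℝ) • ((p - x) + (q - x)) := by
    rw [hmdef]; module
  have hnorm : ‖m - x‖ = 1/2 * ‖(p - x) + (q - x)‖ := by
    rw [hmx, norm_smul]; simp [Real.norm_eq_abs]
  have par := parallelogram_law_with_norm ℝ (p - x) (q - x)
  have hpq : (p - x) - (q - x) = p - q := by abel
  rw [hpq] at par
  have hT : ‖p - q‖^2 ≤ 0 := by nlinarith [norm_nonneg ((p-x)+(q-x)), norm_nonneg (p-q)]
  have hT0 : ‖p - q‖ = 0 := by nlinarith [norm_nonneg (p - q)]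
  exact sub_eq_zero.mp (norm_eq_zero.mp hT0)

-- uniqueness for β g
lemma proxg_unique {n : ℕ} (g : Euc n → ℝ) (hg : ConvexOn ℝ Set.univ g) (β : ℝ) (hβ : 0 < β)
    (x p q : Euc n)
    (hp : p ∈ proxSet (fun u => ((β * g u : ℝ) : EReal)) x)
    (hq : q ∈ proxSet (fun u => ((β * g u : ℝ) : EReal)) x) : p = q := by
  apply prox_unique_core _ x p q (β * g p) (β * g q) hp hq rfl rfl
  have hconv := hg.2 (Set.mem_univ p) (Set.mem_univ q)
      (by norm_num : (0:ℝ) ≤ 1/2) (by norm_num : (0:ℝ) ≤ 1/2) (by norm_num)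
  have hmeq : (1/2 : ℝ) • (p + q) = (1/2 : ℝ) • p + (1/2 : ℝ) • q := smul_add _ _ _
  rw [hmeq]
  rw [EReal.coe_le_coe_iff]
  simp only [smul_eq_mul] at hconv
  nlinarith [hconv, hβ.le]

lemma ereal_real (x : EReal) (h1 : x ≠ ⊥) (h2 : x ≠ ⊤) : ∃ r : ℝ, x = (r : EReal) := by
  lift x to ℝ using ⟨h2, h1⟩
  exact ⟨x, rfl⟩

lemma conj_lb {n : ℕ} (d : Euc n) (x : Euc n) :
    ((inner ℝ x d : ℝ) : EReal) ≤ conjFn (iotaInd d) x := by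
  have h := le_iSup (fun u : Euc n => (((inner ℝ x u : ℝ) : EReal) - iotaInd d u)) d
  simpa [conjFn, iotaInd] using h

lemma conj_ne_bot {n : ℕ} (d : Euc n) (x : Euc n) : conjFn (iotaInd d) x ≠ ⊥ :=
  ((EReal.bot_lt_coe _).trans_le (conj_lb d x)).ne'

lemma conj_zero {n : ℕ} (d : Euc n) : conjFn (iotaInd d) 0 = 0 := by
  apply le_antisymm
  · apply iSup_le
    intro u
    by_cases h : ∀ i, d i ≤ u i
    · simp [iotaInd, h, inner_zero_left]
    · simp [iotaInd, h]
  · simpa using conj_lb d 0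

lemma conj_ub {n : ℕ} (d : Euc n) (x u : Euc n) (h : ∀ i, d i ≤ u i) :
    ((inner ℝ x u : ℝ) : EReal) ≤ conjFn (iotaInd d) x := by
  have hh := le_iSup (fun u : Euc n => (((inner ℝ x u : ℝ) : EReal) - iotaInd d u)) u
  simpa [conjFn, iotaInd, h] using hh

lemma conj_midpoint {n : ℕ} (d : Euc n) (p q : Euc n) (a b : ℝ)
    (hpa : conjFn (iotaInd d) p = (a : EReal)) (hqb : conjFn (iotaInd d) q = (b : EReal)) :
    conjFn (iotaInd d) ((1/2 : ℝ) • (p + q)) ≤ (((a + b)/2 : ℝ) : EReal) := by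
  apply iSup_le
  intro u
  by_cases h : ∀ i, d i ≤ u i
  · simp only [iotaInd, if_pos h, sub_zero]
    rw [EReal.coe_le_coe_iff]
    have hp' : (inner ℝ p u : ℝ) ≤ a := by
      have := conj_ub d p u h
      rw [hpa] at this
      exact_mod_cast this
    have hq' : (inner ℝ q u : ℝ) ≤ b := by
      have := conj_ub d q u h
      rw [hqb] at this
      exact_mod_cast this
    have hin : (inner ℝ ((1/2 : ℝ) • (p + q)) u : ℝ) = 1/2 * ((inner ℝ p u : ℝ) + (inner ℝ q u : ℝ)) := by
      rw [real_inner_smul_left, inner_add_left]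
    rw [hin]
    linarith
  · simp [iotaInd, if_neg h]

lemma conj_mem_finite {n : ℕ} (d : Euc n) (η : ℝ) (hη : 0 < η) (x p : Euc n)
    (hp : p ∈ proxSet (fun u => ((η : ℝ) : EReal) * conjFn (iotaInd d) u) x) :
    ∃ a : ℝ, conjFn (iotaInd d) p = (a : EReal) := by
  refine ereal_real _ (conj_ne_bot d p) ?_
  intro htop
  have h0 := hp 0
  simp only [htop, conj_zero, mul_zero] at h0
  rw [EReal.coe_mul_top_of_pos (by exact_mod_cast hη), EReal.add_top_of_ne_bot (EReal.coe_ne_bot _),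
      add_zero] at h0
  exact (EReal.coe_lt_top _).not_ge h0

lemma proxc_unique {n : ℕ} (d : Euc n) (η : ℝ) (hη : 0 < η) (x p q : Euc n)
    (hp : p ∈ proxSet (fun u => ((η : ℝ) : EReal) * conjFn (iotaInd d) u) x)
    (hq : q ∈ proxSet (fun u => ((η : ℝ) : EReal) * conjFn (iotaInd d) u) x) : p = q := by
  obtain ⟨a, ha⟩ := conj_mem_finite d η hη x p hp
  obtain ⟨b, hb⟩ := conj_mem_finite d η hη x q hq
  apply prox_unique_core _ x p q (η * a) (η * b) hp hq
  · simp [ha, ← EReal.coe_mul]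
  · simp [hb, ← EReal.coe_mul]
  · have hmid := conj_midpoint d p q a b ha hb
    have hnt : conjFn (iotaInd d) ((1/2 : ℝ) • (p + q)) ≠ ⊤ := by
      intro htop
      rw [htop] at hmid
      exact (EReal.coe_lt_top _).not_ge hmid
    obtain ⟨t, ht⟩ := ereal_real _ (conj_ne_bot d ((1/2 : ℝ) • (p + q))) hnt
    rw [ht] at hmid
    have ht' : t ≤ (a + b)/2 := by exact_mod_cast hmid
    show ((η : ℝ) : EReal) * conjFn (iotaInd d) ((1/2 : ℝ) • (p + q)) ≤ _
    rw [ht, ← EReal.coe_mul, EReal.coe_le_coe_iff]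
    nlinarith

/-- The block operator `W = P⁻¹G = [[(1/β)I, −Dᵀ],[−D, (1/η)I]]` on `ℝ^{m₁} × ℝ^{m₂}`. -/
def Wapp {m₁ m₂ : ℕ} (β η : ℝ) (D : Matrix (Fin m₂) (Fin m₁) ℝ)
    (z : Euc m₁ × Euc m₂) : Euc m₁ × Euc m₂ :=
  ((1 / β) • z.1 - mVec D.transpose z.2, -(mVec D z.1) + (1 / η) • z.2)

/-- The bilinear form `⟨z, Ww⟩` associated with `W`. -/
def ipW {m₁ m₂ : ℕ} (β η : ℝ) (D : Matrix (Fin m₂) (Fin m₁) ℝ)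
    (z w : Euc m₁ × Euc m₂) : ℝ :=
  (inner ℝ z.1 (Wapp β η D w).1 : ℝ) + (inner ℝ z.2 (Wapp β η D w).2 : ℝ)

/-- The `W`-weighted norm `‖z‖_W = ⟨z, Wz⟩^{1/2}`. -/
def normW {m₁ m₂ : ℕ} (β η : ℝ) (D : Matrix (Fin m₂) (Fin m₁) ℝ)
    (z : Euc m₁ × Euc m₂) : ℝ :=
  Real.sqrt (ipW β η D z z)


/-- explicit form of the fixed-point iteration of T_W.  For
z^k = (v^k; y^k), one has z^{k+1} = T_W(z^k) if and only if
v^{k+1} = prox_{βg}(v^k − β(∇f(v^k) + Dᵀy^k)) and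
y^{k+1} = prox_{η ι_d*}(y^k + ηD(2v^{k+1} − v^k)).  `TG` is characterized by its
implicit fixed-point property `hTG`, `Winv` is the inverse of `W`,
T_W = T_G ∘ (I − W⁻¹∇r), and `r (v, y) = f v` so `∇r z = (∇f z.1, 0)`. -/
theorem stmt16 {m₁ m₂ : ℕ} (D : Matrix (Fin m₂) (Fin m₁) ℝ) (d : Euc m₂)
    (f g : Euc m₁ → ℝ) (L : ℝ)
    (hfdiff : Differentiable ℝ f) (hfconv : ConvexOn ℝ Set.univ f)
    (hflip : ∀ x y : Euc m₁, ‖gradient f x - gradient f y‖ ≤ L * ‖x - y‖)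
    (hgconv : ConvexOn ℝ Set.univ g)
    (β η : ℝ) (hβ : 0 < β) (hη : 0 < η)
    (TG : Euc m₁ × Euc m₂ → Euc m₁ × Euc m₂)
    (hTG : ∀ w : Euc m₁ × Euc m₂,
      (TG w).1 ∈ proxSet (fun u => ((β * g u : ℝ) : EReal))
          (w.1 - β • mVec D.transpose w.2) ∧
      (TG w).2 ∈ proxSet (fun u => ((η : ℝ) : EReal) * conjFn (iotaInd d) u)
          ((2 * η) • mVec D (TG w).1 - η • mVec D w.1 + w.2))
    (Winv : Euc m₁ × Euc m₂ → Euc m₁ × Euc m₂)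
    (hWinv₁ : ∀ z, Wapp β η D (Winv z) = z)
    (hWinv₂ : ∀ z, Winv (Wapp β η D z) = z)
    (zk zk1 : Euc m₁ × Euc m₂) :
    zk1 = TG (zk - Winv (gradient f zk.1, 0)) ↔
      (zk1.1 ∈ proxSet (fun u => ((β * g u : ℝ) : EReal))
          (zk.1 - β • (gradient f zk.1 + mVec D.transpose zk.2)) ∧
       zk1.2 ∈ proxSet (fun u => ((η : ℝ) : EReal) * conjFn (iotaInd d) u)
          (zk.2 + η • mVec D ((2 : ℝ) • zk1.1 - zk.1))) := by

  set u := Winv (gradient f zk.1, 0) with hu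
  have he := hWinv₁ (gradient f zk.1, 0)
  have he1 : (1/β) • u.1 - mVec D.transpose u.2 = gradient f zk.1 := congrArg Prod.fst he
  have he2 : -(mVec D u.1) + (1/η) • u.2 = 0 := congrArg Prod.snd he
  have hβ1 : β * (1/β) = 1 := by field_simp
  have hη1 : η * (1/η) = 1 := by field_simp
  have hu1 : u.1 = β • gradient f zk.1 + β • mVec D.transpose u.2 := by
    have h := congrArg (fun v => β • v) he1
    simp only [smul_sub, smul_smul, hβ1, one_smul] at h
    rw [← h]; abel
  have hu2 : u.2 = η • mVec D u.1 := by
    have h := congrArg (fun v => η • v) he2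
    simp only [smul_add, smul_smul, hη1, one_smul, smul_zero, smul_neg] at h
    have h' : -(η • mVec D u.1) + u.2 = 0 := h
    linear_combination (norm := module) h'
  have key1 : (zk - u).1 - β • mVec D.transpose (zk - u).2
      = zk.1 - β • (gradient f zk.1 + mVec D.transpose zk.2) := by
    rw [Prod.fst_sub, Prod.snd_sub, mVec_sub, hu1]
    module
  have key2 : ∀ a : Euc m₁, (2 * η) • mVec D a - η • mVec D (zk - u).1 + (zk - u).2
      = zk.2 + η • mVec D ((2 : ℝ) • a - zk.1) := by
    intro a
    rw [Prod.fst_sub, Prod.snd_sub, mVec_sub, mVec_sub, mVec_smul, hu2]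
    module
  constructor
  · rintro rfl
    obtain ⟨h1, h2⟩ := hTG (zk - u)
    rw [key1] at h1
    rw [key2 (TG (zk - u)).1] at h2
    exact ⟨h1, h2⟩
  · rintro ⟨h1, h2⟩
    obtain ⟨g1, g2⟩ := hTG (zk - u)
    rw [key1] at g1
    rw [key2 (TG (zk - u)).1] at g2
    have e1 : zk1.1 = (TG (zk - u)).1 := proxg_unique g hgconv β hβ _ _ _ h1 g1
    rw [e1] at h2
    have e2 : zk1.2 = (TG (zk - u)).2 := proxc_unique d η hη _ _ _ h2 g2
    exact Prod.ext e1 e2
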